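/- arXiv:0802.4095 — 2 statements merged into one kernel-verified Lean document; each statement's English description precedes it below -/
import Mathlib

section
/- Fix a real α > 2 and set r = ⌈α⌉. Suppose 00v ∈ 𝓛 and 00v is α-power-free. If 0^r v = x u y where u is a factor with some period p satisfying |u|/p ≥ α, then x is the empty word and u = 0^r. -/
/-- Thue–Morse morphism: 0 ↦ 01, 1 ↦ 10 (false = 0, true = 1). -/
def mu : List Bool → List Bool :=
  fun w => w.flatMap (fun b => if b then [true, false] else [false, true])

/-- `w` has period `p`: `w[i] = w[i+p]` whenever both defined. -/
def HasPeriod (w : List Bool) (p : ℕ) : Prop :=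
  ∀ i, i + p < w.length → w[i]? = w[i + p]?

/-- `w` is α-power-free: no factor `u` has a period `p` with `|u|/p ≥ α`. -/
def PowerFree (α : ℝ) (w : List Bool) : Prop :=
  ∀ u p, u <:+: w → 0 < p → HasPeriod u p → (u.length : ℝ) / p < α

/-- `𝓛`: factors of images of `mu`. -/
def InL (w : List Bool) : Prop := ∃ x, w <:+: mu x

lemma mu_cons (a : Bool) (z : List Bool) :
    mu (a :: z) = (if a then [true, false] else [false, true]) ++ mu z := by
  simp [mu]

lemma mu_alt (z : List Bool) : ∀ (m : ℕ) (b : Bool),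
    (mu z)[2*m]? = some b → (mu z)[2*m+1]? = some (!b) := by
  induction z with
  | nil => intro m b h; simp [mu] at h
  | cons a z ih =>
    intro m b h
    rcases m with _ | m
    · cases a <;> simp_all [mu_cons]
    · have h2 : 2*(m+1) = (2*m) + 2 := by ring
      have h3 : 2*(m+1)+1 = (2*m+1) + 2 := by ring
      rw [h2] at h
      rw [h3]
      cases a <;>
        simp only [mu_cons, if_true, if_false, List.cons_append, List.nil_append,
          List.getElem?_cons_succ] at h ⊢ <;>
        exact ih m b h

/-- No three consecutive `false`s in a factor of an image of `mu`. -/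
lemma no3 (w : List Bool) (hw : InL w) (i : ℕ) :
    ¬(w[i]? = some false ∧ w[i+1]? = some false ∧ w[i+2]? = some false) := by
  rintro ⟨h0, h1, h2⟩
  obtain ⟨z, s, t, hst⟩ := hw
  have key : ∀ j b, w[j]? = some b → (mu z)[s.length + j]? = some b := by
    intro j b hb
    have hj : j < w.length := (List.getElem?_eq_some_iff.mp hb).1
    rw [← hst, List.append_assoc, List.getElem?_append_right (by omega),
      Nat.add_sub_cancel_left, List.getElem?_append_left hj]
    exact hb
  have k0 := key i false h0
  have k1 := key (i+1) false h1
  have k2 := key (i+2) false h2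
  rw [show s.length + (i+1) = (s.length + i) + 1 by omega] at k1
  rw [show s.length + (i+2) = (s.length + i) + 2 by omega] at k2
  rcases Nat.even_or_odd (s.length + i) with ⟨m, hm⟩ | ⟨m, hm⟩
  · rw [show s.length + i = 2*m by omega] at k0 k1
    have := mu_alt z m false k0
    rw [this] at k1
    simp at k1
  · rw [show s.length + i + 1 = 2*(m+1) by omega] at k1
    rw [show s.length + i + 2 = 2*(m+1)+1 by omega] at k2
    have := mu_alt z (m+1) false k1
    rw [this] at k2
    simp at k2

theorem lemma4 (α : ℝ) (hα : 2 < α) (r : ℕ) (hr : r = ⌈α⌉₊)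
    (v : List Bool) (hL : InL ([false, false] ++ v))
    (hfree : PowerFree α ([false, false] ++ v))
    (x u y : List Bool) (p : ℕ) (hp : 0 < p)
    (hsplit : List.replicate r false ++ v = x ++ u ++ y)
    (hper : HasPeriod u p) (hexp : α ≤ (u.length : ℝ) / p) :
    x = [] ∧ u = List.replicate r false := by
  have hpR : (0:ℝ) < p := by exact_mod_cast hp
  have hLge : α * p ≤ (u.length : ℝ) := (le_div_iff₀ hpR).mp hexp
  have h2p : 2*p < u.length := by
    have h1 : (2:ℝ)*p < α*p := by nlinarith
    have h2 : ((2*p : ℕ) : ℝ) < (u.length : ℝ) := by push_cast; linarith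
    exact_mod_cast h2
  have hru : r ≤ u.length := by
    rw [hr]
    apply Nat.ceil_le.mpr
    calc α ≤ (u.length : ℝ) / p := hexp
      _ ≤ (u.length : ℝ) := div_le_self (by positivity) (by exact_mod_cast hp)
  have hr3 : 2 < r := by
    rw [hr]; exact Nat.lt_ceil.mpr (by exact_mod_cast hα)
  have hWu : ∀ j, j < u.length →
      (List.replicate r false ++ v)[x.length + j]? = u[j]? := by
    intro j hj
    rw [hsplit, List.append_assoc, List.getElem?_append_right (by omega),
      Nat.add_sub_cancel_left, List.getElem?_append_left hj]
  have hW0 : ∀ n, n < r → (List.replicate r false ++ v)[n]? = some false := by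
    intro n hn
    rw [List.getElem?_append_left (by simpa using hn)]
    simp [List.getElem?_replicate, hn]
  have hWv : ∀ n, r ≤ n → (List.replicate r false ++ v)[n]? = v[n - r]? := by
    intro n hn
    rw [List.getElem?_append_right (by simpa using hn)]
    simp
  have huz : ∀ j, j < u.length → x.length + j < r → u[j]? = some false := by
    intro j hj hjr
    rw [← hWu j hj, hW0 _ hjr]
  by_cases hA : x.length + u.length ≤ r
  · -- u lies inside the zero block
    have hx0 : x.length = 0 := by omega
    have hur : u.length = r := by omega
    refine ⟨List.length_eq_zero_iff.mp hx0, ?_⟩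
    rw [← hur]
    refine List.eq_replicate_iff.mpr ⟨rfl, ?_⟩
    intro b hb
    obtain ⟨n, hn⟩ := List.mem_iff_getElem?.mp hb
    have hnl : n < u.length := (List.getElem?_eq_some_iff.mp hn).1
    have := huz n hnl (by omega)
    rw [this] at hn
    exact (Option.some_injective _ hn).symm
  · exfalso
    push_neg at hA
    have hv3 := no3 _ hL
    by_cases hB : r ≤ x.length + 2
    · -- u is a factor of 00v : contradicts power-freeness
      have hinf : u <:+: ([false, false] ++ v) := by
        have h1 : u = ((x ++ u ++ y).drop x.length).take u.length := by
          rw [List.append_assoc, List.drop_left, List.take_left]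
        have hW : [false, false] ++ v = (x ++ u ++ y).drop (r-2) := by
          rw [← hsplit]
          have hrep : List.replicate r false
              = List.replicate (r-2) false ++ [false, false] := by
            rw [show ([false, false] : List Bool) = List.replicate 2 false from rfl,
              ← List.replicate_add]
            congr 1
            omega
          rw [hrep, List.append_assoc, List.drop_left' (by simp)]
        have h2 : (x ++ u ++ y).drop x.length
            = ([false, false] ++ v).drop (x.length - (r-2)) := by
          rw [hW, List.drop_drop]
          congr 1
          omega
        rw [h1, h2]
        exact ((List.take_prefix _ _).isInfix).trans ((List.drop_suffix _ _).isInfix)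
      have := hfree u p hinf hp hper
      linarith
    · -- u starts strictly inside the zeros and sticks out: 000 occurs in v
      push_neg at hB
      have hz : ∀ j, j < r - x.length → u[j]? = some false := by
        intro j hj
        exact huz j (by omega) (by omega)
      have hv0 : ¬ v[0]? = some false := by
        intro h
        exact hv3 0 ⟨rfl, rfl, h⟩
      have hpq : r - x.length ≤ p := by
        by_contra hpq
        push_neg at hpq
        have hper' := hper (r - x.length - p) (by omega)
        rw [show r - x.length - p + p = r - x.length by omega] at hper'
        rw [hz (r - x.length - p) (by omega)] at hper'
        have h4 := hWu (r - x.length) (by omega)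
        rw [show x.length + (r - x.length) = r by omega, hWv r le_rfl,
          Nat.sub_self] at h4
        exact hv0 (h4.trans hper'.symm)
      have hvf : ∀ t, t < 3 → v[x.length + p - r + t]? = some false := by
        intro t ht
        have h5 : u[p + t]? = some false := by
          rw [show p + t = t + p by omega, ← hper t (by omega)]
          exact hz t (by omega)
        have h6 := hWu (p + t) (by omega)
        rw [hWv (x.length + (p + t)) (by omega),
          show x.length + (p + t) - r = x.length + p - r + t by omega] at h6
        exact h6.trans h5
      apply hv3 (x.length + p - r + 2)
      refine ⟨?_, ?_, ?_⟩
      · simpa using hvf 0 (by omega)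
      · rw [show x.length + p - r + 2 + 1 = (x.length + p - r + 1) + 2 from rfl]
        exact hvf 1 (by omega)
      · rw [show x.length + p - r + 2 + 2 = (x.length + p - r + 2) + 2 from rfl]
        exact hvf 2 (by omega)
end

section
/- Let α > 2, r = ⌈α⌉, s ≥ 3 and t positive integers with μ^s(0) = x00y, |x| = t, and 2 < r − t/2^s < α. Suppose 00v ∈ 𝓛 and 00v contains a factor of period p which is a β-power (length/period = β). Then δ^t μ^s(0^r v) contains a factor of period 2^s·p which is a β-power. -/
lemma mu_append (a b : List Bool) : mu (a ++ b) = mu a ++ mu b :=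
  List.flatMap_append

lemma muIter_append (s : ℕ) (a b : List Bool) :
    mu^[s] (a ++ b) = mu^[s] a ++ mu^[s] b := by
  induction s generalizing a b with
  | zero => simp
  | succ n ih => simp [Function.iterate_succ_apply, mu_append, ih]

lemma mu_length (w : List Bool) : (mu w).length = 2 * w.length := by
  induction w with
  | nil => simp [mu]
  | cons a l ih =>
    have : mu (a :: l) = mu [a] ++ mu l := mu_append [a] l
    rw [this, List.length_append, ih]
    cases a <;> simp [mu] <;> ring

lemma muIter_length (s : ℕ) (w : List Bool) :
    (mu^[s] w).length = 2 ^ s * w.length := by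
  induction s generalizing w with
  | zero => simp
  | succ n ih =>
    rw [Function.iterate_succ_apply, ih, mu_length, pow_succ]
    ring

lemma muIter_infix (s : ℕ) {u w : List Bool} (h : u <:+: w) :
    mu^[s] u <:+: mu^[s] w := by
  obtain ⟨a, b, rfl⟩ := h
  exact ⟨mu^[s] a, mu^[s] b, by rw [muIter_append, muIter_append]⟩

lemma muIter_drop (s p : ℕ) (u : List Bool) :
    (mu^[s] u).drop (2 ^ s * p) = mu^[s] (u.drop p) := by
  rcases le_or_gt p u.length with h | h
  · conv_lhs => rw [show u = u.take p ++ u.drop p from (List.take_append_drop p u).symm]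
    rw [muIter_append, ← show (mu^[s] (u.take p)).length = 2 ^ s * p by
        rw [muIter_length, List.length_take, min_eq_left h],
      List.drop_left]
  · rw [List.drop_eq_nil_of_le (le_of_lt h)]
    have h2 : (mu^[s] u).length ≤ 2 ^ s * p := by
      rw [muIter_length]; exact Nat.mul_le_mul_left _ (le_of_lt h)
    rw [List.drop_eq_nil_of_le h2]
    refine (List.eq_nil_of_length_eq_zero ?_).symm
    rw [muIter_length]; simp

lemma hasPeriod_iff (w : List Bool) (p : ℕ) :
    HasPeriod w p ↔ w.drop p <+: w := by
  constructor
  · intro h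
    rw [List.prefix_iff_eq_take]
    apply List.ext_getElem?
    intro n
    rw [List.getElem?_drop, List.getElem?_take, List.length_drop]
    by_cases hn : n < w.length - p
    · rw [if_pos hn]
      have := h n (by omega)
      rw [Nat.add_comm p n, ← this]
    · rw [if_neg hn, List.getElem?_eq_none (by omega)]
  · intro h i hi
    obtain ⟨c, hc⟩ := h
    conv_lhs => rw [← hc]
    rw [List.getElem?_append, List.length_drop, if_pos (by omega), List.getElem?_drop,
      Nat.add_comm]

theorem lemma5_part2 (α : ℝ) (hα : 2 < α) (r s t : ℕ) (hr : r = ⌈α⌉₊)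
    (hs : 3 ≤ s) (ht : 0 < t) (x y : List Bool)
    (hx : mu^[s] [false] = x ++ [false, false] ++ y) (hxt : x.length = t)
    (hβ1 : 2 < (r : ℝ) - t / 2 ^ s) (hβ2 : (r : ℝ) - t / 2 ^ s < α)
    (v : List Bool) (hL : InL ([false, false] ++ v))
    (β : ℝ) (u : List Bool) (p : ℕ) (hp : 0 < p)
    (hu : u <:+: ([false, false] ++ v)) (hper : HasPeriod u p)
    (hexp : (u.length : ℝ) / p = β) :
    ∃ u' : List Bool, u' <:+: (mu^[s] (List.replicate r false ++ v)).drop t ∧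
      HasPeriod u' (2 ^ s * p) ∧ (u'.length : ℝ) / (2 ^ s * p) = β := by
  -- r ≥ 3
  have hts : (t : ℝ) / 2 ^ s ≥ 0 := by positivity
  have hr2 : (2 : ℝ) < r := lt_of_lt_of_le hβ1 (by linarith)
  have hr3 : 3 ≤ r := by exact_mod_cast hr2
  refine ⟨mu^[s] u, ?_, ?_, ?_⟩
  · -- infix
    have hdecomp : List.replicate r false ++ v =
        [false] ++ (List.replicate (r - 3) false ++ ([false, false] ++ v)) := by
      conv_lhs => rw [show r = 1 + ((r - 3) + 2) from by omega]
      rw [List.replicate_add, List.replicate_add]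
      simp [List.append_assoc]
    rw [hdecomp, muIter_append, muIter_append, hx]
    have hxlen : t ≤ (x ++ [false, false] ++ y).length := by
      simp only [List.length_append, List.length_cons, List.length_nil, hxt]; omega
    rw [List.drop_append_of_le_length hxlen]
    have : (x ++ [false, false] ++ y).drop t = [false, false] ++ y := by
      rw [List.append_assoc, ← hxt, List.drop_left]
    rw [this]
    have hsuffix : mu^[s] ([false, false] ++ v) <:+
        ([false, false] ++ y ++ mu^[s] (List.replicate (r - 3) false)) ++
          mu^[s] ([false, false] ++ v) := List.suffix_append _ _
    calc mu^[s] u <:+: mu^[s] ([false, false] ++ v) := muIter_infix s hu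
      _ <:+: _ := by
          rw [← List.append_assoc]
          exact hsuffix.isInfix
  · -- period
    rw [hasPeriod_iff] at hper ⊢
    rw [muIter_drop]
    obtain ⟨c, hc⟩ := hper
    exact ⟨mu^[s] c, by rw [← muIter_append, hc]⟩
  · -- exponent
    rw [muIter_length, ← hexp]
    push_cast
    rw [mul_div_mul_left _ _ (by positivity : ((2:ℝ) ^ s) ≠ 0)]
end
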